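/- If α is a quadratic irrational, then the sequence ((q_n − p_n) mod m) is ultimately periodic for any positive integer m, where p_n/q_n are the convergents of α. -/

import Mathlib

/-- Auxiliary numerators: `pAux d (n+2) = p_n` with `p_{-2} = 0`, `p_{-1} = 1`. -/
def pAux (d : ℕ → ℕ) : ℕ → ℕ
  | 0 => 0
  | 1 => 1
  | (n+2) => d n * pAux d (n+1) + pAux d n

/-- Auxiliary denominators: `qAux d (n+2) = q_n` with `q_{-2} = 1`, `q_{-1} = 0`. -/
def qAux (d : ℕ → ℕ) : ℕ → ℕ
  | 0 => 1
  | 1 => 0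
  | (n+2) => d n * qAux d (n+1) + qAux d n

/-- The numerator `p_n` of the `n`-th convergent of `[d 0; d 1, d 2, ...]`. -/
def pconv (d : ℕ → ℕ) (n : ℕ) : ℕ := pAux d (n+2)

/-- The denominator `q_n` of the `n`-th convergent of `[d 0; d 1, d 2, ...]`. -/
def qconv (d : ℕ → ℕ) (n : ℕ) : ℕ := qAux d (n+2)

/-- `α` is a quadratic irrational. -/
def QuadraticIrrational (α : ℝ) : Prop :=
  Irrational α ∧ ∃ A B C : ℤ, A ≠ 0 ∧ (A : ℝ) * α ^ 2 + (B : ℝ) * α + (C : ℝ) = 0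

set_option linter.unusedSectionVars false

lemma two_step {P : ℕ → Prop} (h0 : P 0) (h1 : P 1)
    (hs : ∀ n, P n → P (n+1) → P (n+2)) (n : ℕ) : P n := by
  have key : ∀ n, P n ∧ P (n+1) := by
    intro n
    induction n with
    | zero => exact ⟨h0, h1⟩
    | succ k ih => exact ⟨ih.2, hs k ih.1 ih.2⟩
  exact (key n).1

lemma det_id (d : ℕ → ℕ) (n : ℕ) :
    (pAux d (n+1) : ℤ) * qAux d n - pAux d n * qAux d (n+1) = (-1)^n := by
  induction n with
  | zero => simp [pAux, qAux]
  | succ k ih =>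
    show (pAux d (k+2) : ℤ) * qAux d (k+1) - pAux d (k+1) * qAux d (k+2) = (-1)^(k+1)
    rw [show pAux d (k+2) = d k * pAux d (k+1) + pAux d k from rfl,
        show qAux d (k+2) = d k * qAux d (k+1) + qAux d k from rfl]
    push_cast
    ring_nf
    ring_nf at ih
    linarith [ih]

lemma qconv_pos (d : ℕ → ℕ) (hd : ∀ i : ℕ, 1 ≤ d (i + 1)) : ∀ n, 0 < qAux d (n+2) := by
  intro n
  induction n using two_step with
  | h0 => simp [qAux]
  | h1 =>
    show 0 < qAux d 3
    have h1 : qAux d 3 = d 1 * qAux d 2 + qAux d 1 := rfl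
    have h2 : qAux d 2 = d 0 * qAux d 1 + qAux d 0 := rfl
    simp [qAux] at h2 ⊢
    exact hd 0
  | hs n ih ih2 =>
    show 0 < qAux d (n+4)
    have : qAux d (n+4) = d (n+2) * qAux d (n+3) + qAux d (n+2) := rfl
    omega

noncomputable def Es (d : ℕ → ℕ) (α : ℝ) (n : ℕ) : ℝ := (qAux d n : ℝ) * α - (pAux d n : ℝ)

section
variable (d : ℕ → ℕ) (α : ℝ) (hα0 : 0 < α)
variable (hd : ∀ i : ℕ, 1 ≤ d (i + 1))
variable (hcf : Filter.Tendsto (fun n => (pconv d n : ℝ) / (qconv d n : ℝ))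
      Filter.atTop (nhds α))

include hd in
lemma num_step (n : ℕ) :
    (pAux d (n+4) : ℤ) * qAux d (n+2) - pAux d (n+2) * qAux d (n+4)
      = (d (n+2) : ℤ) * (-1)^n := by
  rw [show pAux d (n+4) = d (n+2) * pAux d (n+3) + pAux d (n+2) from rfl,
      show qAux d (n+4) = d (n+2) * qAux d (n+3) + qAux d (n+2) from rfl]
  have h := det_id d (n+2)
  push_cast
  push_cast at h
  linear_combination (d (n+2) : ℤ) * h
end
set_option linter.unusedSectionVars false
section
variable (d : ℕ → ℕ) (α : ℝ) (hα0 : 0 < α)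
variable (hd : ∀ i : ℕ, 1 ≤ d (i + 1))
variable (hcf : Filter.Tendsto (fun n => (pconv d n : ℝ) / (qconv d n : ℝ))
      Filter.atTop (nhds α))

include hd hcf hα0 in
lemma Es_sign : ∀ n, 0 < (-1:ℝ)^n * Es d α n := by
  have hqpos : ∀ n, (0:ℝ) < (qAux d (n+2) : ℝ) := fun n => by
    exact_mod_cast qconv_pos d hd n
  set c : ℕ → ℝ := fun n => (pconv d n : ℝ) / (qconv d n : ℝ) with hc
  -- step inequalities
  have hstep : ∀ n : ℕ,
      ((pAux d (n+4) : ℝ) * qAux d (n+2) - pAux d (n+2) * qAux d (n+4)) = (d (n+2) : ℝ) * (-1)^n := by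
    intro n
    exact_mod_cast num_step d hd n
  have heven : ∀ k : ℕ, c (2*k) < c (2*k+2) := by
    intro k
    have h1 := hqpos (2*k)
    have h2 := hqpos (2*k+2)
    rw [hc]
    simp only [pconv, qconv]
    rw [div_lt_div_iff₀ h1 h2]
    have h3 := hstep (2*k)
    have h4 : ((-1:ℝ))^(2*k) = 1 := by
      rw [pow_mul]; norm_num
    have h5 : (1:ℝ) ≤ (d (2*k+2) : ℝ) := by exact_mod_cast hd (2*k+1)
    have h6 : (2*k+2)+2 = 2*k+4 := by ring
    rw [h6]
    nlinarith [h3, h5]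
  have hodd : ∀ k : ℕ, c (2*k+3) < c (2*k+1) := by
    intro k
    have h1 := hqpos (2*k+1)
    have h2 := hqpos (2*k+3)
    rw [hc]
    simp only [pconv, qconv]
    rw [div_lt_div_iff₀ h2 h1]
    have h3 := hstep (2*k+1)
    have h4 : ((-1:ℝ))^(2*k+1) = -1 := by
      rw [pow_succ, pow_mul]; norm_num
    have h5 : (1:ℝ) ≤ (d (2*k+3) : ℝ) := by exact_mod_cast hd (2*k+2)
    have h6 : (2*k+1)+2 = 2*k+3 := by ring
    rw [h6] at h3 ⊢
    have h7 : (2*k+1)+4 = 2*k+5 := by ring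
    nlinarith [h3, h5]
  -- even subsequence tends to α and is strictly monotone
  have hme : StrictMono (fun k => c (2*k)) := by
    apply strictMono_nat_of_lt_succ
    intro k
    have := heven k
    simpa [Nat.mul_succ] using this
  have hmo : StrictAnti (fun k => c (2*k+1)) := by
    apply strictAnti_nat_of_succ_lt
    intro k
    have := hodd k
    show c (2*(k+1)+1) < c (2*k+1)
    rw [show 2*(k+1)+1 = 2*k+3 from by ring]
    exact this
  have hte : Filter.Tendsto (fun k => c (2*k)) Filter.atTop (nhds α) :=
    hcf.comp (Filter.tendsto_atTop_mono (fun k => by omega : ∀ k, k ≤ 2*k) Filter.tendsto_id)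
  have hto : Filter.Tendsto (fun k => c (2*k+1)) Filter.atTop (nhds α) :=
    hcf.comp (Filter.tendsto_atTop_mono (fun k => by omega : ∀ k, k ≤ 2*k+1) Filter.tendsto_id)
  have hlt : ∀ k, c (2*k) < α := by
    intro k
    have h1 : c (2*(k+1)) ≤ α := hme.monotone.ge_of_tendsto hte (k+1)
    have h2 : c (2*k) < c (2*(k+1)) := hme (by omega)
    linarith
  have hgt : ∀ k, α < c (2*k+1) := by
    intro k
    have h1 : α ≤ c (2*(k+1)+1) := hmo.antitone.le_of_tendsto hto (k+1)
    have h2 : c (2*(k+1)+1) < c (2*k+1) := hmo (by omega)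
    linarith
  -- conclude
  intro n
  match n with
  | 0 =>
    show 0 < (-1:ℝ)^0 * Es d α 0
    have : Es d α 0 = α := by simp [Es, pAux, qAux]
    rw [this]; simpa using hα0
  | 1 => norm_num [Es, pAux, qAux]
  | (n+2) =>
    have hE : Es d α (n+2) = (qAux d (n+2) : ℝ) * (α - c n) := by
      have hne : (qAux d (n+2) : ℝ) ≠ 0 := ne_of_gt (hqpos n)
      rw [hc]; simp only [pconv, qconv, Es]
      field_simp
    rcases Nat.even_or_odd n with ⟨k, hk⟩ | ⟨k, hk⟩
    · have h1 : c n < α := by rw [hk, show k + k = 2*k by ring]; exact hlt k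
      have h2 : ((-1:ℝ))^(n+2) = 1 := by
        rw [hk]; rw [show k+k+2 = 2*(k+1) by ring, pow_mul]; norm_num
      rw [hE, h2]
      have := hqpos n
      nlinarith
    · have h1 : α < c n := by rw [hk, show 2*k+1 = 2*k+1 from rfl]; exact hgt k
      have h2 : ((-1:ℝ))^(n+2) = -1 := by
        rw [hk, show 2*k+1+2 = 2*(k+1)+1 by ring, pow_succ, pow_mul]; norm_num
      rw [hE, h2]
      have := hqpos n
      nlinarith
end
lemma Es_rec (d : ℕ → ℕ) (α : ℝ) (n : ℕ) :
    Es d α (n+2) = (d n : ℝ) * Es d α (n+1) + Es d α n := by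
  unfold Es
  rw [show pAux d (n+2) = d n * pAux d (n+1) + pAux d n from rfl,
      show qAux d (n+2) = d n * qAux d (n+1) + qAux d n from rfl]
  push_cast; ring

lemma Es_det (d : ℕ → ℕ) (α : ℝ) (n : ℕ) :
    (qAux d (n+1) : ℝ) * Es d α n - (qAux d n : ℝ) * Es d α (n+1) = (-1)^n := by
  unfold Es
  have h := det_id d n
  have h2 : ((pAux d (n+1) : ℝ) * qAux d n - pAux d n * qAux d (n+1) : ℝ) = ((-1)^n : ℝ) := by
    exact_mod_cast h
  linarith [h2]

noncomputable def Xs (d : ℕ → ℕ) (α : ℝ) (n : ℕ) : ℝ := -Es d α n / Es d α (n+1)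

section
variable (d : ℕ → ℕ) (α : ℝ) (hα0 : 0 < α) (hα1 : α < 1)
variable (hd : ∀ i : ℕ, 1 ≤ d (i + 1))
variable (hcf : Filter.Tendsto (fun n => (pconv d n : ℝ) / (qconv d n : ℝ))
      Filter.atTop (nhds α))

include hα0 hα1 hd hcf

lemma Es_ne (n : ℕ) : Es d α n ≠ 0 := by
  have h := Es_sign d α hα0 hd hcf n
  intro h0
  rw [h0] at h
  simp at h

lemma u_id (n : ℕ) :
    (qAux d (n+1) : ℝ) * ((-1)^n * Es d α n)
      + (qAux d n : ℝ) * ((-1)^(n+1) * Es d α (n+1)) = 1 := by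
  have h := Es_det d α n
  have hs : ((-1:ℝ)^n) * ((-1:ℝ)^n) = 1 := by
    rw [← pow_add]
    exact Even.neg_one_pow ⟨n, rfl⟩
  linear_combination ((-1:ℝ)^n) * h + hs

lemma u_dec (n : ℕ) (hn : 1 ≤ n) :
    (-1:ℝ)^(n+1) * Es d α (n+1) < (-1:ℝ)^n * Es d α n := by
  have hr := Es_rec d α n
  have key : (-1:ℝ)^n * Es d α n
      = (-1:ℝ)^(n+2) * Es d α (n+2) + (d n : ℝ) * ((-1:ℝ)^(n+1) * Es d α (n+1)) := by
    linear_combination (-(-1:ℝ)^n) * hr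
  have h1 := Es_sign d α hα0 hd hcf (n+2)
  have h2 := Es_sign d α hα0 hd hcf (n+1)
  have h3 : (1:ℝ) ≤ (d n : ℝ) := by
    obtain ⟨k, rfl⟩ : ∃ k, n = k + 1 := ⟨n - 1, by omega⟩
    exact_mod_cast hd k
  nlinarith

lemma u_le_one : ∀ n, (-1:ℝ)^n * Es d α n ≤ 1 := by
  intro n
  induction n using two_step with
  | h0 => simp [Es, pAux, qAux]; linarith
  | h1 => norm_num [Es, pAux, qAux]
  | hs k ih ih2 =>
    have := u_dec d α hα0 hα1 hd hcf (k+1) (by omega)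
    linarith

lemma qu_le_one' (n : ℕ) :
    (qAux d (n+1) : ℝ) * ((-1)^n * Es d α n) ≤ 1
      ∧ (qAux d n : ℝ) * ((-1)^(n+1) * Es d α (n+1)) ≤ 1 := by
  have h := u_id d α hα0 hα1 hd hcf n
  have h1 := Es_sign d α hα0 hd hcf n
  have h2 := Es_sign d α hα0 hd hcf (n+1)
  have q1 : (0:ℝ) ≤ (qAux d (n+1) : ℝ) := Nat.cast_nonneg _
  have q0 : (0:ℝ) ≤ (qAux d n : ℝ) := Nat.cast_nonneg _
  constructor <;> nlinarith

lemma qu_le_one (n : ℕ) : (qAux d n : ℝ) * ((-1)^n * Es d α n) ≤ 1 := by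
  match n with
  | 0 => simp [Es, pAux, qAux]; linarith
  | 1 => norm_num [Es, pAux, qAux]
  | (k+2) =>
    have h1 := (qu_le_one' d α hα0 hα1 hd hcf (k+1)).1
    have hdec := u_dec d α hα0 hα1 hd hcf (k+1) (by omega)
    have q1 : (0:ℝ) ≤ (qAux d (k+2) : ℝ) := Nat.cast_nonneg _
    nlinarith

lemma abs_Es (n : ℕ) : |Es d α n| = (-1:ℝ)^n * Es d α n := by
  have h1 := Es_sign d α hα0 hd hcf n
  have : |((-1:ℝ)^n * Es d α n)| = (-1:ℝ)^n * Es d α n := abs_of_pos h1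
  rwa [abs_mul, abs_pow, abs_neg, abs_one, one_pow, one_mul] at this

lemma Xs_sub (n : ℕ) :
    Xs d α n - d n = -Es d α (n+2) / Es d α (n+1) := by
  have hr := Es_rec d α n
  have hne := Es_ne d α hα0 hα1 hd hcf (n+1)
  unfold Xs
  field_simp
  linear_combination hr

lemma Xs_bounds (n : ℕ) : 0 < Xs d α n - (d n : ℝ) ∧ Xs d α n - (d n : ℝ) < 1 := by
  have e1 := Es_sign d α hα0 hd hcf (n+1)
  have e2 := Es_sign d α hα0 hd hcf (n+2)
  have e3 := u_dec d α hα0 hα1 hd hcf (n+1) (by omega)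
  have h8 := Xs_sub d α hα0 hα1 hd hcf n
  have h9 : Xs d α n - (d n : ℝ)
      = ((-1:ℝ)^(n+2) * Es d α (n+2)) / ((-1:ℝ)^(n+1) * Es d α (n+1)) := by
    rw [h8, div_eq_div_iff (Es_ne d α hα0 hα1 hd hcf (n+1)) (ne_of_gt e1)]
    ring
  rw [h9]
  constructor
  · exact div_pos e2 e1
  · rw [div_lt_one e1]
    exact e3

lemma Xs_step (n : ℕ) : Xs d α (n+1) = 1 / (Xs d α n - d n) := by
  rw [Xs_sub d α hα0 hα1 hd hcf n, one_div_div, div_neg]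
  unfold Xs
  rw [neg_div]
end
def Qf (d : ℕ → ℕ) (A B C : ℤ) (k : ℕ) : ℤ :=
  A * (pAux d k)^2 + B * (pAux d k) * (qAux d k) + C * (qAux d k)^2

def Bf (d : ℕ → ℕ) (A B C : ℤ) (n : ℕ) : ℤ :=
  2*A*(pAux d (n+1))*(pAux d n)
    + B*((pAux d (n+1))*(qAux d n) + (pAux d n)*(qAux d (n+1)))
    + 2*C*(qAux d (n+1))*(qAux d n)

section
variable (d : ℕ → ℕ) (α : ℝ) (hα0 : 0 < α) (hα1 : α < 1)
variable (hd : ∀ i : ℕ, 1 ≤ d (i + 1))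
variable (hcf : Filter.Tendsto (fun n => (pconv d n : ℝ) / (qconv d n : ℝ))
      Filter.atTop (nhds α))
variable (A B C : ℤ) (hABC : (A:ℝ) * α^2 + (B:ℝ) * α + (C:ℝ) = 0)

include hABC in
lemma Qf_real (k : ℕ) : (Qf d A B C k : ℝ)
    = (A:ℝ) * (Es d α k)^2 - (2*A*α+B) * ((qAux d k : ℝ) * Es d α k) := by
  unfold Qf Es
  push_cast
  linear_combination ((qAux d k : ℝ))^2 * hABC

include hABC in
lemma Bf_real (n : ℕ) : (Bf d A B C n : ℝ)
    = 2*(A:ℝ)*(Es d α (n+1) * Es d α n)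
      - (2*A*α+B)*(Es d α (n+1) * (qAux d n : ℝ) + Es d α n * (qAux d (n+1) : ℝ)) := by
  unfold Bf Es
  push_cast
  linear_combination (2*(qAux d (n+1) : ℝ)*(qAux d n : ℝ)) * hABC

include hα0 hα1 hd hcf hABC in
lemma Qf_bound (k : ℕ) : |(Qf d A B C k : ℝ)| ≤ |(A:ℝ)| + |2*A*α+B| := by
  rw [Qf_real d α A B C hABC k]
  have e1 : |Es d α k| ≤ 1 := by
    rw [abs_Es d α hα0 hα1 hd hcf]
    exact u_le_one d α hα0 hα1 hd hcf k
  have e2 : (qAux d k : ℝ) * |Es d α k| ≤ 1 := by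
    rw [abs_Es d α hα0 hα1 hd hcf]
    exact qu_le_one d α hα0 hα1 hd hcf k
  have e3 : (0:ℝ) ≤ (qAux d k : ℝ) := Nat.cast_nonneg _
  have h4 : |(A:ℝ) * (Es d α k)^2 - (2*A*α+B) * ((qAux d k : ℝ) * Es d α k)|
      ≤ |(A:ℝ)| * |Es d α k|^2 + |2*A*α+B| * ((qAux d k : ℝ) * |Es d α k|) := by
    refine (abs_sub _ _).trans ?_
    rw [abs_mul, abs_mul, abs_pow, abs_mul, abs_of_nonneg e3]
  have h5 : |Es d α k|^2 ≤ 1 := by nlinarith [abs_nonneg (Es d α k)]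
  nlinarith [abs_nonneg (A:ℝ), abs_nonneg (2*(A:ℝ)*α+B), abs_nonneg (Es d α k)]

include hα0 hα1 hd hcf hABC in
lemma Bf_bound (n : ℕ) : |(Bf d A B C n : ℝ)| ≤ 2*(|(A:ℝ)| + |2*A*α+B|) := by
  rw [Bf_real d α A B C hABC n]
  have u1 : |Es d α n| ≤ 1 := by
    rw [abs_Es d α hα0 hα1 hd hcf]; exact u_le_one d α hα0 hα1 hd hcf n
  have u2 : |Es d α (n+1)| ≤ 1 := by
    rw [abs_Es d α hα0 hα1 hd hcf]; exact u_le_one d α hα0 hα1 hd hcf (n+1)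
  have e1 : (qAux d n : ℝ) * |Es d α (n+1)| ≤ 1 := by
    rw [abs_Es d α hα0 hα1 hd hcf]
    exact (qu_le_one' d α hα0 hα1 hd hcf n).2
  have e2 : (qAux d (n+1) : ℝ) * |Es d α n| ≤ 1 := by
    rw [abs_Es d α hα0 hα1 hd hcf]
    exact (qu_le_one' d α hα0 hα1 hd hcf n).1
  have e3 : (0:ℝ) ≤ (qAux d n : ℝ) := Nat.cast_nonneg _
  have e4 : (0:ℝ) ≤ (qAux d (n+1) : ℝ) := Nat.cast_nonneg _
  have h4 : |2*(A:ℝ)*(Es d α (n+1) * Es d α n)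
      - (2*A*α+B)*(Es d α (n+1) * (qAux d n : ℝ) + Es d α n * (qAux d (n+1) : ℝ))|
      ≤ 2 * |(A:ℝ)| * (|Es d α (n+1)| * |Es d α n|)
        + |2*A*α+B| * (|Es d α (n+1)| * (qAux d n : ℝ) + |Es d α n| * (qAux d (n+1) : ℝ)) := by
    refine (abs_sub _ _).trans ?_
    gcongr
    · rw [abs_mul, abs_mul, abs_mul]
      simp
    · rw [abs_mul]
      refine mul_le_mul_of_nonneg_left ?_ (abs_nonneg _)
      refine (abs_add_le _ _).trans ?_
      rw [abs_mul, abs_mul, abs_of_nonneg e3, abs_of_nonneg e4]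
  have p1 : |Es d α (n+1)| * |Es d α n| ≤ 1 := by
    nlinarith [abs_nonneg (Es d α n), abs_nonneg (Es d α (n+1))]
  have p2 : |Es d α (n+1)| * (qAux d n : ℝ) ≤ 1 := by rw [mul_comm]; exact e1
  have p3 : |Es d α n| * (qAux d (n+1) : ℝ) ≤ 1 := by rw [mul_comm]; exact e2
  nlinarith [abs_nonneg (A:ℝ), abs_nonneg (2*(A:ℝ)*α+B)]

include hα0 hα1 hd hcf hABC in
lemma Xs_root (n : ℕ) :
    (Qf d A B C (n+1) : ℝ) * (Xs d α n)^2 + (Bf d A B C n : ℝ) * Xs d α n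
      + (Qf d A B C n : ℝ) = 0 := by
  have h1 : Xs d α n * Es d α (n+1) = -Es d α n :=
    div_mul_cancel₀ _ (Es_ne d α hα0 hα1 hd hcf (n+1))
  have hrel : α * (Xs d α n * (qAux d (n+1) : ℝ) + (qAux d n : ℝ))
      = Xs d α n * (pAux d (n+1) : ℝ) + (pAux d n : ℝ) := by
    unfold Es at h1
    linear_combination h1
  unfold Qf Bf
  push_cast
  linear_combination
    ((Xs d α n * (qAux d (n+1) : ℝ) + (qAux d n : ℝ))^2) * hABC
    - ((A:ℝ)*((Xs d α n * (pAux d (n+1) : ℝ) + (pAux d n : ℝ))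
        + α*(Xs d α n * (qAux d (n+1) : ℝ) + (qAux d n : ℝ)))
      + (B:ℝ)*(Xs d α n * (qAux d (n+1) : ℝ) + (qAux d n : ℝ))) * hrel

include hα0 hα1 hd hcf hABC in
lemma Qf_ne (hirr : Irrational α) (hA : A ≠ 0) (k : ℕ) : Qf d A B C (k+1) ≠ 0 := by
  intro h0
  match k with
  | 0 =>
    apply hA
    simpa [Qf, pAux, qAux] using h0
  | (k+1) =>
    have hq : 0 < qAux d (k+2) := qconv_pos d hd k
    have hfac : Es d α (k+2) * ((A:ℝ)*((qAux d (k+2) : ℝ)*α + (pAux d (k+2) : ℝ))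
        + (B:ℝ)*(qAux d (k+2) : ℝ))
        = (qAux d (k+2) : ℝ)^2 * ((A:ℝ)*α^2 + B*α + C) - (Qf d A B C (k+2) : ℝ) := by
      unfold Es Qf
      push_cast
      ring
    rw [hABC, h0] at hfac
    push_cast at hfac
    simp only [mul_zero, zero_mul, sub_zero] at hfac
    have hW : (A:ℝ)*((qAux d (k+2) : ℝ)*α + (pAux d (k+2) : ℝ)) + (B:ℝ)*(qAux d (k+2) : ℝ) = 0 := by
      rcases mul_eq_zero.mp hfac with h | h
      · exact absurd h (Es_ne d α hα0 hα1 hd hcf (k+2))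
      · exact h
    set num : ℤ := -(A*(pAux d (k+2) : ℤ) + B*(qAux d (k+2) : ℤ)) with hnum
    set den : ℤ := A*(qAux d (k+2) : ℤ) with hden
    have hdenne : den ≠ 0 := by
      simp only [hden, mul_ne_zero_iff]
      exact ⟨hA, Int.natCast_ne_zero.mpr (by omega)⟩
    have hαeq : α = (num : ℝ) / (den : ℝ) := by
      rw [eq_div_iff (by exact_mod_cast hdenne)]
      push_cast [hnum, hden]
      linarith [hW]
    exact hirr ⟨(num : ℚ)/(den : ℚ), by rw [hαeq]; push_cast; ring⟩
end
section
variable (d : ℕ → ℕ) (α : ℝ) (hα0 : 0 < α) (hα1 : α < 1)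
variable (hd : ∀ i : ℕ, 1 ≤ d (i + 1))
variable (hcf : Filter.Tendsto (fun n => (pconv d n : ℝ) / (qconv d n : ℝ))
      Filter.atTop (nhds α))

include hα0 hα1 hd hcf in
lemma d_floor_eq (n1 n2 : ℕ) (h : Xs d α n1 = Xs d α n2) : d n1 = d n2 := by
  have b1 := Xs_bounds d α hα0 hα1 hd hcf n1
  have b2 := Xs_bounds d α hα0 hα1 hd hcf n2
  rw [h] at b1
  have h1 : (d n1 : ℝ) < (d n2 : ℝ) + 1 := by linarith [b1.1, b1.2, b2.1, b2.2]
  have h2 : (d n2 : ℝ) < (d n1 : ℝ) + 1 := by linarith [b1.1, b1.2, b2.1, b2.2]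
  have h1' : d n1 < d n2 + 1 := by exact_mod_cast h1
  have h2' : d n2 < d n1 + 1 := by exact_mod_cast h2
  omega

include hα0 hα1 hd hcf in
lemma d_evt_periodic (hirr : Irrational α) (A B C : ℤ) (hA : A ≠ 0)
    (hABC : (A:ℝ) * α^2 + (B:ℝ) * α + (C:ℝ) = 0) :
    ∃ N T : ℕ, 0 < T ∧ ∀ n : ℕ, N ≤ n → d (n + T) = d n := by
  classical
  set K : ℝ := |(A:ℝ)| + |2*A*α+B| with hK
  have hK0 : 0 ≤ K := by positivity
  set MZ : ℤ := ⌈2*K⌉ with hMZ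
  have hMZle : 2*K ≤ (MZ:ℝ) := Int.le_ceil _
  have mem : ∀ x : ℤ, |(x:ℝ)| ≤ 2*K → x ∈ Finset.Icc (-MZ) MZ := by
    intro x hx
    rw [Finset.mem_Icc]
    have hxz : |x| ≤ MZ := by
      have h : |(x:ℝ)| ≤ (MZ:ℝ) := le_trans hx hMZle
      rw [← Int.cast_abs] at h
      exact_mod_cast h
    exact abs_le.mp hxz
  set S := Finset.Icc (-MZ) MZ with hS
  have memQ : ∀ k, Qf d A B C k ∈ S := fun k =>
    mem _ (le_trans (Qf_bound d α hα0 hα1 hd hcf A B C hABC k) (by linarith))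
  have memB : ∀ n, Bf d A B C n ∈ S := fun n =>
    mem _ (le_trans (Bf_bound d α hα0 hα1 hd hcf A B C hABC n) (by linarith))
  set F : ℕ → S × S × S := fun n =>
    (⟨Qf d A B C (n+1), memQ (n+1)⟩, ⟨Bf d A B C n, memB n⟩, ⟨Qf d A B C n, memQ n⟩) with hF
  obtain ⟨y, hy⟩ := Finite.exists_infinite_fiber F
  have hSinf : (F ⁻¹' {y}).Infinite := Set.infinite_coe_iff.mp hy
  obtain ⟨a, ha⟩ := hSinf.nonempty
  obtain ⟨b, hb, hab⟩ := hSinf.exists_gt a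
  obtain ⟨c, hc, hbc⟩ := hSinf.exists_gt b
  have ea : F a = y := ha
  have eb : F b = y := hb
  have ec : F c = y := hc
  have hQ1ab : Qf d A B C (a+1) = Qf d A B C (b+1) :=
    congrArg (fun t : S × S × S => (t.1 : ℤ)) (ea.trans eb.symm)
  have hQ1ac : Qf d A B C (a+1) = Qf d A B C (c+1) :=
    congrArg (fun t : S × S × S => (t.1 : ℤ)) (ea.trans ec.symm)
  have hBab : Bf d A B C a = Bf d A B C b :=
    congrArg (fun t : S × S × S => (t.2.1 : ℤ)) (ea.trans eb.symm)
  have hBac : Bf d A B C a = Bf d A B C c :=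
    congrArg (fun t : S × S × S => (t.2.1 : ℤ)) (ea.trans ec.symm)
  have hQ0ab : Qf d A B C a = Qf d A B C b :=
    congrArg (fun t : S × S × S => (t.2.2 : ℤ)) (ea.trans eb.symm)
  have hQ0ac : Qf d A B C a = Qf d A B C c :=
    congrArg (fun t : S × S × S => (t.2.2 : ℤ)) (ea.trans ec.symm)
  have hroot := Xs_root d α hα0 hα1 hd hcf A B C hABC
  have hAne : ((Qf d A B C (a+1) : ℤ) : ℝ) ≠ 0 :=
    Int.cast_ne_zero.mpr (Qf_ne d α hα0 hα1 hd hcf A B C hABC hirr hA a)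
  -- two of the three complete quotients are equal
  have htri : Xs d α a = Xs d α b ∨ Xs d α a = Xs d α c ∨ Xs d α b = Xs d α c := by
    by_contra hcon
    push_neg at hcon
    obtain ⟨h1, h2, h3⟩ := hcon
    have ra := hroot a
    have rb : (Qf d A B C (a+1) : ℝ) * (Xs d α b)^2 + (Bf d A B C a : ℝ) * Xs d α b
        + (Qf d A B C a : ℝ) = 0 := by
      rw [hQ1ab, hBab, hQ0ab]; exact hroot b
    have rc : (Qf d A B C (a+1) : ℝ) * (Xs d α c)^2 + (Bf d A B C a : ℝ) * Xs d α c
        + (Qf d A B C a : ℝ) = 0 := by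
      rw [hQ1ac, hBac, hQ0ac]; exact hroot c
    have g1 : (Xs d α a - Xs d α b)
        * ((Qf d A B C (a+1) : ℝ)*(Xs d α a + Xs d α b) + (Bf d A B C a : ℝ)) = 0 := by
      linear_combination ra - rb
    have g2 : (Xs d α a - Xs d α c)
        * ((Qf d A B C (a+1) : ℝ)*(Xs d α a + Xs d α c) + (Bf d A B C a : ℝ)) = 0 := by
      linear_combination ra - rc
    have w1 : (Qf d A B C (a+1) : ℝ)*(Xs d α a + Xs d α b) + (Bf d A B C a : ℝ) = 0 :=
      (mul_eq_zero.mp g1).resolve_left (sub_ne_zero.mpr h1)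
    have w2 : (Qf d A B C (a+1) : ℝ)*(Xs d α a + Xs d α c) + (Bf d A B C a : ℝ) = 0 :=
      (mul_eq_zero.mp g2).resolve_left (sub_ne_zero.mpr h2)
    have : (Qf d A B C (a+1) : ℝ) * (Xs d α b - Xs d α c) = 0 := by
      linear_combination w1 - w2
    rcases mul_eq_zero.mp this with h | h
    · exact hAne h
    · exact h3 (by linarith [sub_eq_zero.mp h])
  -- extract i < j with equal complete quotients
  obtain ⟨i, j, hij, hXeq0⟩ : ∃ i j : ℕ, i < j ∧ Xs d α i = Xs d α j := by
    rcases htri with h | h | h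
    · exact ⟨a, b, hab, h⟩
    · exact ⟨a, c, lt_trans hab hbc, h⟩
    · exact ⟨b, c, hbc, h⟩
  -- propagate the equality forward
  have hXeq : ∀ k : ℕ, Xs d α (i + k) = Xs d α (j + k) := by
    intro k
    induction k with
    | zero => simpa using hXeq0
    | succ k ih =>
      have hde : d (i + k) = d (j + k) := d_floor_eq d α hα0 hα1 hd hcf _ _ ih
      have e1 : Xs d α (i + (k+1)) = Xs d α ((i+k) + 1) := by ring_nf
      have e2 : Xs d α (j + (k+1)) = Xs d α ((j+k) + 1) := by ring_nf
      rw [e1, e2, Xs_step d α hα0 hα1 hd hcf, Xs_step d α hα0 hα1 hd hcf, ih, hde]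
  refine ⟨i, j - i, by omega, ?_⟩
  intro n hn
  have hk := hXeq (n - i)
  have h1 : i + (n - i) = n := by omega
  have h2 : j + (n - i) = n + (j - i) := by omega
  rw [h1, h2] at hk
  exact d_floor_eq d α hα0 hα1 hd hcf _ _ hk.symm
end
lemma mod_periodic (d : ℕ → ℕ) (N1 T1 : ℕ) (hT1 : 0 < T1)
    (hdp : ∀ n, N1 ≤ n → d (n + T1) = d n) (m : ℕ) (hm : 0 < m) :
    ∃ N T : ℕ, 0 < T ∧ ∀ n : ℕ, N ≤ n →
      pAux d (n + T) ≡ pAux d n [MOD m] ∧ qAux d (n + T) ≡ qAux d n [MOD m] := by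
  classical
  have hdpc : ∀ c n, N1 ≤ n → d (n + c*T1) = d n := by
    intro c
    induction c with
    | zero => simp
    | succ c ih =>
      intro n hn
      have : n + (c+1)*T1 = (n + c*T1) + T1 := by ring
      rw [this, hdp _ (by omega), ih n hn]
  set G : ℕ → Fin T1 × Fin m × Fin m × Fin m × Fin m := fun k =>
    (⟨(N1+k) % T1, Nat.mod_lt _ hT1⟩,
     ⟨pAux d (N1+k) % m, Nat.mod_lt _ hm⟩,
     ⟨pAux d (N1+k+1) % m, Nat.mod_lt _ hm⟩,
     ⟨qAux d (N1+k) % m, Nat.mod_lt _ hm⟩,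
     ⟨qAux d (N1+k+1) % m, Nat.mod_lt _ hm⟩) with hG
  obtain ⟨y, hy⟩ := Finite.exists_infinite_fiber G
  have hSinf : (G ⁻¹' {y}).Infinite := Set.infinite_coe_iff.mp hy
  obtain ⟨k1, hk1⟩ := hSinf.nonempty
  obtain ⟨k2, hk2, hklt⟩ := hSinf.exists_gt k1
  have e12 : G k1 = G k2 := (show G k1 = y from hk1).trans (show G k2 = y from hk2).symm
  set i := N1 + k1 with hi
  set j := N1 + k2 with hj
  have hijlt : i < j := by omega
  have hmod : i % T1 = j % T1 := congrArg (fun t => (t.1 : ℕ)) e12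
  have hp0 : pAux d i % m = pAux d j % m := congrArg (fun t => (t.2.1 : ℕ)) e12
  have hp1 : pAux d (i+1) % m = pAux d (j+1) % m := congrArg (fun t => (t.2.2.1 : ℕ)) e12
  have hq0 : qAux d i % m = qAux d j % m := congrArg (fun t => (t.2.2.2.1 : ℕ)) e12
  have hq1 : qAux d (i+1) % m = qAux d (j+1) % m := congrArg (fun t => (t.2.2.2.2 : ℕ)) e12
  set T := j - i with hT
  have hTpos : 0 < T := by omega
  obtain ⟨c, hc⟩ : T1 ∣ (j - i) := (Nat.modEq_iff_dvd' (le_of_lt hijlt)).mp hmod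
  have hdT : ∀ n, N1 ≤ n → d (n + T) = d n := by
    intro n hn
    rw [hT, hc, mul_comm]
    exact hdpc c n hn
  have hiT : i + T = j := by omega
  have main : ∀ k : ℕ, pAux d (i + k + T) ≡ pAux d (i + k) [MOD m]
      ∧ qAux d (i + k + T) ≡ qAux d (i + k) [MOD m] := by
    intro k
    induction k using two_step with
    | h0 =>
      constructor
      · show pAux d (i + 0 + T) % m = pAux d (i + 0) % m
        rw [show i + 0 + T = j by omega, show i + 0 = i from rfl]
        exact hp0.symm
      · show qAux d (i + 0 + T) % m = qAux d (i + 0) % m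
        rw [show i + 0 + T = j by omega, show i + 0 = i from rfl]
        exact hq0.symm
    | h1 =>
      constructor
      · show pAux d (i + 1 + T) % m = pAux d (i + 1) % m
        rw [show i + 1 + T = j + 1 by omega]
        exact hp1.symm
      · show qAux d (i + 1 + T) % m = qAux d (i + 1) % m
        rw [show i + 1 + T = j + 1 by omega]
        exact hq1.symm
    | hs k ih ih2 =>
      have hdk : d (i + k + T) = d (i + k) := hdT (i + k) (by omega)
      have ep : pAux d (i + (k+2)) = d (i+k) * pAux d (i+k+1) + pAux d (i+k) := by
        rw [show i + (k+2) = (i+k) + 2 by ring]; rfl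
      have ep' : pAux d (i + (k+2) + T) = d (i+k) * pAux d (i+k+1+T) + pAux d (i+k+T) := by
        rw [show i + (k+2) + T = (i+k+T) + 2 by ring]
        show d (i+k+T) * pAux d (i+k+T+1) + pAux d (i+k+T) = _
        rw [hdk, show i+k+T+1 = i+k+1+T by ring]
      have eq : qAux d (i + (k+2)) = d (i+k) * qAux d (i+k+1) + qAux d (i+k) := by
        rw [show i + (k+2) = (i+k) + 2 by ring]; rfl
      have eq' : qAux d (i + (k+2) + T) = d (i+k) * qAux d (i+k+1+T) + qAux d (i+k+T) := by
        rw [show i + (k+2) + T = (i+k+T) + 2 by ring]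
        show d (i+k+T) * qAux d (i+k+T+1) + qAux d (i+k+T) = _
        rw [hdk, show i+k+T+1 = i+k+1+T by ring]
      constructor
      · rw [ep, ep']
        exact ((Nat.ModEq.refl (d (i+k))).mul ih2.1).add ih.1
      · rw [eq, eq']
        exact ((Nat.ModEq.refl (d (i+k))).mul ih2.2).add ih.2
  refine ⟨i, T, hTpos, ?_⟩
  intro n hn
  have h := main (n - i)
  rwa [show i + (n - i) = n by omega] at h

lemma p_le_q (d : ℕ → ℕ) (hd0 : d 0 = 0) (hd : ∀ i : ℕ, 1 ≤ d (i + 1)) (n : ℕ) :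
    pAux d (n+2) ≤ qAux d (n+2) := by
  induction n using two_step with
  | h0 => simp [pAux, qAux, hd0]
  | h1 =>
    show pAux d 3 ≤ qAux d 3
    have hp3 : pAux d 3 = d 1 * pAux d 2 + pAux d 1 := rfl
    have hq3 : qAux d 3 = d 1 * qAux d 2 + qAux d 1 := rfl
    rw [hp3, hq3]
    have hp2 : pAux d 2 = 0 := by
      show d 0 * pAux d 1 + pAux d 0 = 0
      simp [pAux, hd0]
    have hq2 : qAux d 2 = 1 := by
      show d 0 * qAux d 1 + qAux d 0 = 1
      simp [qAux, hd0]
    rw [hp2, hq2]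
    have h5 : pAux d 1 = 1 := rfl
    have h6 : qAux d 1 = 0 := rfl
    rw [h5, h6]
    have h7 : 1 ≤ d 1 := hd 0
    omega
  | hs k ih ih2 =>
    show pAux d (k+4) ≤ qAux d (k+4)
    have h1 : pAux d (k+4) = d (k+2) * pAux d (k+3) + pAux d (k+2) := rfl
    have h2 : qAux d (k+4) = d (k+2) * qAux d (k+3) + qAux d (k+2) := rfl
    rw [h1, h2]
    exact Nat.add_le_add (Nat.mul_le_mul_left _ ih2) ih

theorem qn_sub_pn_mod_ultimately_periodic' (α : ℝ) (hα0 : 0 < α) (hα1 : α < 1)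
    (hquad : Irrational α ∧ ∃ A B C : ℤ, A ≠ 0 ∧ (A : ℝ) * α ^ 2 + (B : ℝ) * α + (C : ℝ) = 0)
    (d : ℕ → ℕ) (hd0 : d 0 = 0)
    (hd : ∀ i : ℕ, 1 ≤ d (i + 1))
    (hcf : Filter.Tendsto (fun n => (pconv d n : ℝ) / (qconv d n : ℝ))
      Filter.atTop (nhds α))
    (m : ℕ) (hm : 0 < m) :
    ∃ N T : ℕ, 0 < T ∧ ∀ n : ℕ, N ≤ n →
      (qconv d (n + T) - pconv d (n + T)) % m = (qconv d n - pconv d n) % m := by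
  obtain ⟨hirr, A, B, C, hA, hABC⟩ := hquad
  obtain ⟨N1, T1, hT1, hdp⟩ := d_evt_periodic d α hα0 hα1 hd hcf hirr A B C hA hABC
  obtain ⟨N, T, hT, hmain⟩ := mod_periodic d N1 T1 hT1 hdp m hm
  refine ⟨N, T, hT, ?_⟩
  intro n hn
  have h := hmain (n+2) (by omega)
  rw [show n + 2 + T = (n + T) + 2 by ring] at h
  have hple : pAux d (n+2) ≤ qAux d (n+2) := p_le_q d hd0 hd n
  have hple' : pAux d ((n+T)+2) ≤ qAux d ((n+T)+2) := p_le_q d hd0 hd (n+T)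
  show (qAux d ((n+T)+2) - pAux d ((n+T)+2)) % m = (qAux d (n+2) - pAux d (n+2)) % m
  have key : (qAux d ((n+T)+2) - pAux d ((n+T)+2)) + pAux d ((n+T)+2)
      ≡ (qAux d (n+2) - pAux d (n+2)) + pAux d (n+2) [MOD m] := by
    rw [Nat.sub_add_cancel hple', Nat.sub_add_cancel hple]
    exact h.2
  exact Nat.ModEq.add_right_cancel h.1 key

theorem qn_sub_pn_mod_ultimately_periodic (α : ℝ) (hα0 : 0 < α) (hα1 : α < 1)
    (hquad : QuadraticIrrational α) (d : ℕ → ℕ) (hd0 : d 0 = 0)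
    (hd : ∀ i : ℕ, 1 ≤ d (i + 1))
    (hcf : Filter.Tendsto (fun n => (pconv d n : ℝ) / (qconv d n : ℝ))
      Filter.atTop (nhds α))
    (m : ℕ) (hm : 0 < m) :
    ∃ N T : ℕ, 0 < T ∧ ∀ n : ℕ, N ≤ n →
      (qconv d (n + T) - pconv d (n + T)) % m = (qconv d n - pconv d n) % m := by
  exact qn_sub_pn_mod_ultimately_periodic' α hα0 hα1 hquad d hd0 hd hcf m hm
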